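/- Let W be a nonempty finite type and b : Set W → ℝ a finitely additive probability (b(∅) = 0, b(Set.univ) = 1, b(X) ≥ 0 for all X, and b(A ∪ B) = b(A) + b(B) whenever A ∩ B = ∅). For X ⊆ W let int(X) be the union of all elementary sets (minimal elements under inclusion of {Y | b(Y) > 0}) contained in X, and let the core be ⋂₀ {Y ⊆ W | b(Y) = 1}. If X is well-defined, i.e., X ∩ core = int(X), then b(X) = b(int(X)). -/

import Mathlib

theorem well_defined_set_belief_eq_interior (W : Type*) [Fintype W] [Nonempty W]
    (b : Set W → ℝ)
    (hempty : b ∅ = 0) (huniv : b Set.univ = 1) (hnonneg : ∀ X : Set W, 0 ≤ b X)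
    (hadd : ∀ A B : Set W, A ∩ B = ∅ → b (A ∪ B) = b A + b B)
    (X : Set W)
    (hwd : X ∩ ⋂₀ {Y : Set W | b Y = 1} =
      ⋃₀ {E : Set W | Minimal (fun Y : Set W => b Y > 0) E ∧ E ⊆ X}) :
    b X = b (⋃₀ {E : Set W | Minimal (fun Y : Set W => b Y > 0) E ∧ E ⊆ X}) := by
  have hsub : ∀ A B : Set W, A ⊆ B → b A ≤ b B := by
    intro A B hAB
    have h1 : A ∩ (B \ A) = ∅ := by ext x; simp [Set.mem_diff]; try tauto
    have h2 : A ∪ (B \ A) = B := by ext x; simp [Set.mem_diff]; try tauto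
    have := hadd A (B \ A) h1
    rw [h2] at this
    linarith [hnonneg (B \ A)]
  have hinter : ∀ A B : Set W, b A = 1 → b B = 1 → b (A ∩ B) = 1 := by
    intro A B hA hB
    have h1 : B ∩ (A \ B) = ∅ := by ext x; simp [Set.mem_diff]; try tauto
    have h2 : B ∪ (A \ B) = A ∪ B := by ext x; simp [Set.mem_diff]; try tauto
    have h3 : (A ∩ B) ∩ (A \ B) = ∅ := by ext x; simp [Set.mem_diff]; try tauto
    have h4 : (A ∩ B) ∪ (A \ B) = A := by ext x; simp [Set.mem_diff]; try tauto
    have e1 := hadd B (A \ B) h1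
    rw [h2] at e1
    have e2 := hadd (A ∩ B) (A \ B) h3
    rw [h4] at e2
    have hle : b (A ∪ B) ≤ 1 := by
      have := hsub (A ∪ B) Set.univ (Set.subset_univ _)
      linarith
    have hge : b (A ∩ B) ≤ 1 := by
      have := hsub (A ∩ B) Set.univ (Set.subset_univ _)
      linarith
    linarith
  have hcore : b (⋂₀ {Y : Set W | b Y = 1}) = 1 := by
    have key : ∀ T : Set (Set W), T.Finite → (∀ Y ∈ T, b Y = 1) → b (⋂₀ T) = 1 := by
      intro T hT
      refine Set.Finite.induction_on (motive := fun T _ => (∀ Y ∈ T, b Y = 1) → b (⋂₀ T) = 1) T hT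
        (fun _ => by simpa using huniv) ?_
      intro a s _ _ ih h
      rw [Set.sInter_insert]
      exact hinter _ _ (h a (Set.mem_insert _ _))
        (ih fun Y hY => h Y (Set.mem_insert_of_mem _ hY))
    exact key _ (Set.toFinite _) fun Y hY => hY
  set C := ⋂₀ {Y : Set W | b Y = 1} with hC
  have hcompl : b Cᶜ = 0 := by
    have h1 : C ∩ Cᶜ = ∅ := Set.inter_compl_self C
    have := hadd C Cᶜ h1
    rw [Set.union_compl_self] at this
    linarith
  have hdiff : b (X \ C) = 0 := by
    have h1 : X \ C ⊆ Cᶜ := fun x hx => hx.2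
    have := hsub _ _ h1
    have := hnonneg (X \ C)
    linarith
  have h1 : (X ∩ C) ∩ (X \ C) = ∅ := by ext x; simp [Set.mem_diff]; try tauto
  have h2 : (X ∩ C) ∪ (X \ C) = X := by ext x; simp [Set.mem_diff]; try tauto
  have e := hadd (X ∩ C) (X \ C) h1
  rw [h2, hwd] at e
  linarith
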